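/- Let p be an odd prime and d ≥ 1 an integer. In 𝔽_p[t][H], let g = ∏_{k=0}^{d}(H − k·t)² (a monic polynomial of degree 2d+2 in H) and let f = (H^p − t^{p−1}·H)·H·(H − d·t)·∏_{k=1}^{d−1}(H − k·t)². Let Rem be the remainder of f upon division by g in (𝔽_p[t])[H]. Then the coefficient of H^{2d+1} in Rem equals −t^{p−1} if p divides d, and equals 0 otherwise. -/
import Mathlib

open Polynomial Finset

lemma qst_aux_P_monic {A : Type*} [CommRing A] (s : ℕ → A) (n : ℕ) :
    (∏ k ∈ Icc 1 n, (X - C (s k))^2).Monic :=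
  monic_prod_of_monic _ _ fun k _ => (monic_X_sub_C _).pow 2

lemma qst_aux_P_deg {A : Type*} [CommRing A] [IsDomain A] (s : ℕ → A) (n : ℕ) :
    (∏ k ∈ Icc 1 n, (X - C (s k))^2).natDegree = 2*n := by
  rw [natDegree_prod_of_monic _ _ (fun k _ => (monic_X_sub_C _).pow 2)]
  have h : ∀ k ∈ Icc 1 n, ((X - C (s k))^2).natDegree = 2 := by
    intro k _
    rw [natDegree_pow, natDegree_X_sub_C]
  rw [Finset.sum_congr rfl h, Finset.sum_const, Nat.card_Icc, smul_eq_mul]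
  omega

lemma qst_aux_g_split {A : Type*} [CommRing A] (s : ℕ → A) (d : ℕ) (hd : 1 ≤ d)
    (hs0 : s 0 = 0) :
    (∏ k ∈ range (d+1), (X - C (s k))^2)
      = X^2 * ((X - C (s d))^2 * ∏ k ∈ Icc 1 (d-1), (X - C (s k))^2) := by
  have hsplit : (range (d+1) : Finset ℕ) = insert 0 (insert d (Icc 1 (d-1))) := by
    ext k; simp only [mem_range, mem_insert, mem_Icc]; omega
  rw [hsplit, prod_insert, prod_insert, hs0, C_0, sub_zero]
  · simp only [mem_Icc]; omega
  · simp only [mem_insert, mem_Icc]; omega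

lemma qst_aux_g_deg {A : Type*} [CommRing A] [IsDomain A] (s : ℕ → A) (d : ℕ) (hd : 1 ≤ d)
    (hs0 : s 0 = 0) :
    (∏ k ∈ range (d+1), (X - C (s k))^2).natDegree = 2*d + 2 := by
  rw [qst_aux_g_split s d hd hs0,
    Monic.natDegree_mul (monic_X_pow 2) (((monic_X_sub_C _).pow 2).mul (qst_aux_P_monic s _)),
    Monic.natDegree_mul ((monic_X_sub_C _).pow 2) (qst_aux_P_monic s _),
    natDegree_X_pow, natDegree_pow, natDegree_X_sub_C, qst_aux_P_deg]
  omega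

lemma qst_aux_zero {A : Type*} [CommRing A] [IsDomain A] (p : ℕ) (hp3 : 3 ≤ p)
    (s : ℕ → A) (T : A) (hs0 : s 0 = 0) (d : ℕ) (hd : 1 ≤ d) (hsd : s d = 0) :
    (((X^p - C T * X) * X * (X - C (s d)) * ∏ k ∈ Icc 1 (d-1), (X - C (s k))^2)
      %ₘ (∏ k ∈ range (d+1), (X - C (s k))^2)).coeff (2*d+1) = -T := by
  set P : A[X] := ∏ k ∈ Icc 1 (d-1), (X - C (s k))^2 with hP
  have hPmonic : P.Monic := qst_aux_P_monic s _
  have hPdeg : P.natDegree = 2*(d-1) := qst_aux_P_deg s _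
  have hgmonic : (∏ k ∈ range (d+1), (X - C (s k))^2).Monic :=
    monic_prod_of_monic _ _ fun k _ => (monic_X_sub_C _).pow 2
  have hX3P : (X^3 * P : A[X]).Monic := (monic_X_pow 3).mul hPmonic
  have hX3Pdeg : (X^3 * P : A[X]).natDegree = 2*d + 1 := by
    rw [Monic.natDegree_mul (monic_X_pow 3) hPmonic, natDegree_X_pow, hPdeg]; omega
  have key : ((X^p - C T * X) * X * (X - C (s d)) * P)
      %ₘ (∏ k ∈ range (d+1), (X - C (s k))^2) = -(C T * (X^3 * P)) := by
    refine (div_modByMonic_unique (X^(p-2)) _ hgmonic ⟨?_, ?_⟩).2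
    · have hpe : (X : A[X]) ^ p = X^(p-2) * X^2 := by
        rw [← pow_add]; congr 1; omega
      rw [qst_aux_g_split s d hd hs0, hsd, C_0, sub_zero, hpe, ← hP]
      ring
    · have h1 : (-(C T * (X^3 * P))).degree ≤ ((2*d+1 : ℕ) : WithBot ℕ) := by
        rw [degree_neg]
        refine le_trans (degree_mul_le _ _) ?_
        have h2 : (X^3 * P : A[X]).degree ≤ ((2*d+1 : ℕ) : WithBot ℕ) := by
          rw [← hX3Pdeg]; exact degree_le_natDegree
        calc (C T).degree + (X^3*P).degree ≤ 0 + ((2*d+1 : ℕ) : WithBot ℕ) :=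
              add_le_add degree_C_le h2
          _ = ((2*d+1 : ℕ) : WithBot ℕ) := by rw [zero_add]
      have h2 : (∏ k ∈ range (d+1), (X - C (s k))^2).degree = ((2*d+2 : ℕ) : WithBot ℕ) := by
        rw [degree_eq_natDegree hgmonic.ne_zero, qst_aux_g_deg s d hd hs0]
      rw [h2]
      exact lt_of_le_of_lt h1 (by exact_mod_cast (by omega : 2*d+1 < 2*d+2))
  rw [key, coeff_neg, coeff_C_mul, ← hX3Pdeg, hX3P.coeff_natDegree, mul_one]

lemma qst_aux_ne {A : Type*} [CommRing A] [IsDomain A] (p : ℕ) (hp3 : 3 ≤ p)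
    (s : ℕ → A) (T : A) (hs0 : s 0 = 0) (d : ℕ) (hd : 1 ≤ d) (hsd : (s d)^(p-1) = T) :
    (((X^p - C T * X) * X * (X - C (s d)) * ∏ k ∈ Icc 1 (d-1), (X - C (s k))^2)
      %ₘ (∏ k ∈ range (d+1), (X - C (s k))^2)).coeff (2*d+1) = 0 := by
  have hgmonic : (∏ k ∈ range (d+1), (X - C (s k))^2).Monic :=
    monic_prod_of_monic _ _ fun k _ => (monic_X_sub_C _).pow 2
  obtain ⟨Q, hQ⟩ := sub_dvd_pow_sub_pow (X : A[X]) (C (s d)) (p-1)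
  have hdvd : (∏ k ∈ range (d+1), (X - C (s k))^2)
      ∣ ((X^p - C T * X) * X * (X - C (s d)) * ∏ k ∈ Icc 1 (d-1), (X - C (s k))^2) := by
    refine ⟨Q, ?_⟩
    have hpe : (X : A[X]) ^ p = X * X^(p-1) := by
      rw [← pow_succ']; congr 1; omega
    have hfac : (X^p - C T * X : A[X]) = X * ((X - C (s d)) * Q) := by
      rw [← hQ, ← C_pow, hsd, hpe]; ring
    rw [hfac, qst_aux_g_split s d hd hs0]; ring
  rw [(modByMonic_eq_zero_iff_dvd hgmonic).2 hdvd, coeff_zero]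

/-- In `𝔽_p[t][H]` with `g = ∏_{k=0}^{d}(H-kt)²` and
`f = (H^p - t^{p-1}H)·H·(H-dt)·∏_{k=1}^{d-1}(H-kt)²`, the coefficient of `H^{2d+1}` in
the remainder of `f` modulo `g` equals `-t^{p-1}` if `p ∣ d`, and `0` otherwise. -/
theorem qst_structure_constant_bb (p : ℕ) (hp : p.Prime) (hodd : p ≠ 2) (d : ℕ) (hd : 1 ≤ d) :
    (((Polynomial.X ^ p
          - Polynomial.C ((Polynomial.X : Polynomial (ZMod p)) ^ (p - 1)) * Polynomial.X)
        * Polynomial.X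
        * (Polynomial.X - Polynomial.C ((d : ZMod p) • (Polynomial.X : Polynomial (ZMod p))))
        * ∏ k ∈ Finset.Icc 1 (d - 1),
            (Polynomial.X - Polynomial.C ((k : ZMod p) • (Polynomial.X : Polynomial (ZMod p)))) ^ 2)
      %ₘ (∏ k ∈ Finset.range (d + 1),
            (Polynomial.X - Polynomial.C ((k : ZMod p) • (Polynomial.X : Polynomial (ZMod p)))) ^ 2)
      : Polynomial (Polynomial (ZMod p))).coeff (2 * d + 1)
      = if p ∣ d then -((Polynomial.X : Polynomial (ZMod p)) ^ (p - 1)) else 0 := by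
  haveI := Fact.mk hp
  have hp3 : 3 ≤ p := by
    have h2 := hp.two_le; omega
  have hs0 : ((0 : ℕ) : ZMod p) • (X : Polynomial (ZMod p)) = 0 := by
    simp
  by_cases hpd : p ∣ d
  · rw [if_pos hpd]
    have hsd : ((d : ZMod p)) • (X : Polynomial (ZMod p)) = 0 := by
      rw [(ZMod.natCast_eq_zero_iff d p).2 hpd, zero_smul]
    exact qst_aux_zero p hp3 (fun k => (k : ZMod p) • (X : Polynomial (ZMod p)))
      ((X : Polynomial (ZMod p))^(p-1)) hs0 d hd hsd
  · rw [if_neg hpd]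
    have hdz : (d : ZMod p) ≠ 0 := fun h => hpd ((ZMod.natCast_eq_zero_iff d p).1 h)
    have hsd : (((d : ZMod p)) • (X : Polynomial (ZMod p)))^(p-1)
        = (X : Polynomial (ZMod p))^(p-1) := by
      rw [_root_.smul_pow, ZMod.pow_card_sub_one_eq_one hdz, one_smul]
    exact qst_aux_ne p hp3 (fun k => (k : ZMod p) • (X : Polynomial (ZMod p)))
      ((X : Polynomial (ZMod p))^(p-1)) hs0 d hd hsd
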